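/- arXiv:2312.08201 — 3 statements merged into one kernel-verified Lean document; each statement's English description precedes it below -/
import Mathlib

section
/- Let A(v) = A_0 - B_l D(v) B_r^T and P ∈ ℝ^{n×2k} with Range(B_l) ⊆ Range(P). Then for every j ≥ 1, Range(A(v)^j P) ⊆ Range(A_0^j P) + Range(A_0^{j-1} P) + … + Range(A_0 P) + Range(P). In particular the block Krylov subspace K_m(A(v), P) is contained in K_m(A_0, P). -/
open Matrix
set_option maxHeartbeats 1000000

/-- The range (column space) of a matrix. -/
def matRange {n m : ℕ} (M : Matrix (Fin n) (Fin m) ℝ) :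
    Submodule ℝ (Fin n → ℝ) :=
  LinearMap.range M.mulVecLin

lemma matRange_mul {n m : ℕ} (M : Matrix (Fin n) (Fin n) ℝ)
    (N : Matrix (Fin n) (Fin m) ℝ) :
    matRange (M * N) = (matRange N).map M.mulVecLin := by
  simp [matRange, Matrix.mulVecLin_mul, LinearMap.range_comp]

lemma matRange_sub_mul {n k m : ℕ} (A0 : Matrix (Fin n) (Fin n) ℝ)
    (Bl Br : Matrix (Fin n) (Fin k) ℝ) (D : Matrix (Fin k) (Fin k) ℝ)
    (X : Matrix (Fin n) (Fin m) ℝ) :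
    matRange ((A0 - Bl * D * Brᵀ) * X) ≤ matRange (A0 * X) ⊔ matRange Bl := by
  rintro _ ⟨v, rfl⟩
  have : ((A0 - Bl * D * Brᵀ) * X).mulVecLin v
      = (A0 * X).mulVecLin v - Bl.mulVecLin ((D * Brᵀ * X).mulVec v) := by
    simp [Matrix.sub_mul, Matrix.sub_mulVec, Matrix.mulVecLin_apply,
      Matrix.mul_assoc, Matrix.mulVec_mulVec]
    rw [← Matrix.mulVec_transpose]
    simp only [Matrix.mulVec_mulVec, Matrix.mul_assoc]
  rw [this]
  exact sub_mem (Submodule.mem_sup_left ⟨v, rfl⟩)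
    (Submodule.mem_sup_right ⟨_, rfl⟩)

/-- With `A(v) = A₀ - Bl D Brᵀ` and `Range(Bl) ⊆ Range(P)`, the range of
`A(v)^j P` is contained in the sum of the ranges of `A₀^i P`, `0 ≤ i ≤ j`;
in particular the block Krylov subspaces are nested:
`K_m(A(v), P) ⊆ K_m(A₀, P)`. -/
theorem stmt_5 {n k : ℕ}
    (A0 : Matrix (Fin n) (Fin n) ℝ)
    (Bl Br : Matrix (Fin n) (Fin k) ℝ)
    (D : Matrix (Fin k) (Fin k) ℝ) (hD : D.IsDiag)
    (P : Matrix (Fin n) (Fin (2 * k)) ℝ)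
    (hBl : matRange Bl ≤ matRange P) :
    (∀ j : ℕ, 1 ≤ j →
        matRange ((A0 - Bl * D * Brᵀ) ^ j * P)
          ≤ ⨆ i ∈ Finset.range (j + 1), matRange (A0 ^ i * P)) ∧
      (∀ m : ℕ,
        (⨆ i ∈ Finset.range m, matRange ((A0 - Bl * D * Brᵀ) ^ i * P))
          ≤ ⨆ i ∈ Finset.range m, matRange (A0 ^ i * P)) := by
  set A := A0 - Bl * D * Brᵀ with hA
  have key : ∀ j : ℕ, matRange (A ^ j * P)
      ≤ ⨆ i ∈ Finset.range (j + 1), matRange (A0 ^ i * P) := by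
    intro j
    induction j with
    | zero =>
        have h0 : (0 : ℕ) ∈ Finset.range 1 := by simp
        calc matRange (A ^ 0 * P) = matRange (A0 ^ 0 * P) := by rw [pow_zero, pow_zero]
          _ ≤ _ := le_iSup₂ (f := fun i (_ : i ∈ Finset.range 1) => matRange (A0 ^ i * P)) 0 h0
    | succ j ih =>
        have hP0 : matRange P = matRange (A0 ^ 0 * P) := by rw [pow_zero, Matrix.one_mul]
        have step : matRange (A ^ (j + 1) * P)
            ≤ matRange (A0 * (A ^ j * P)) ⊔ matRange Bl := by
          have : A ^ (j + 1) * P = A * (A ^ j * P) := by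
            rw [pow_succ', Matrix.mul_assoc]
          rw [this, hA]
          exact matRange_sub_mul A0 Bl Br D _
        refine step.trans (sup_le ?_ ?_)
        · rw [matRange_mul]
          have := Submodule.map_mono (f := A0.mulVecLin) ih
          refine this.trans ?_
          rw [Submodule.map_iSup]
          refine iSup_le fun i => ?_
          rw [Submodule.map_iSup]
          refine iSup_le fun hi => ?_
          have hi' : i + 1 ∈ Finset.range (j + 1 + 1) :=
            Finset.mem_range.2 (by have := Finset.mem_range.1 hi; omega)
          have : (matRange (A0 ^ i * P)).map A0.mulVecLin
              = matRange (A0 ^ (i + 1) * P) := by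
            rw [← matRange_mul, ← Matrix.mul_assoc, ← pow_succ']
          rw [this]
          exact le_iSup₂ (f := fun l (_ : l ∈ Finset.range (j + 1 + 1)) => matRange (A0 ^ l * P)) (i + 1) hi'
        · refine hBl.trans ?_
          rw [hP0]
          exact le_iSup₂ (f := fun l (_ : l ∈ Finset.range (j + 1 + 1)) => matRange (A0 ^ l * P)) 0
            (Finset.mem_range.2 (Nat.succ_pos _))
  refine ⟨fun j _ => key j, fun m => ?_⟩
  refine iSup_le fun i => iSup_le fun hi => ?_
  refine (key i).trans ?_
  refine iSup_le fun l => iSup_le fun hl => ?_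
  have hlm : l ∈ Finset.range m :=
    Finset.mem_range.2 (by have := Finset.mem_range.1 hi; have := Finset.mem_range.1 hl; omega)
  exact le_iSup₂ (f := fun l (_ : l ∈ Finset.range m) => matRange (A0 ^ l * P)) l hlm
end

section
/- Let A(v) = A_0 - B_l D(v) B_r^T with A_0 and A(v) invertible, D(v) invertible diagonal, and P ∈ ℝ^{n×2k} such that Range(B_l) ⊆ Range(P). If D(v)^{-1} - B_r^T A_0^{-1} B_l is invertible, then Range(A(v)^{-1} P) ⊆ Range(A_0^{-1} P), and more generally Range(A(v)^{-j} P) ⊆ Range(A_0^{-j}P) + … + Range(A_0^{-1}P) for all j ≥ 1, so K_m(A(v)^{-1}, A(v)^{-1}P) ⊆ K_m(A_0^{-1}, A_0^{-1}P). -/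
open Matrix

lemma matRange_mul_eq {n p q : ℕ} (M : Matrix (Fin n) (Fin p) ℝ)
    (N : Matrix (Fin p) (Fin q) ℝ) :
    matRange (M * N) = (matRange N).map M.mulVecLin := by
  simp [matRange, Matrix.mulVecLin_mul, LinearMap.range_comp]

lemma mem_matRange_iff {n m : ℕ} (M : Matrix (Fin n) (Fin m) ℝ) (x : Fin n → ℝ) :
    x ∈ matRange M ↔ ∃ v, M.mulVec v = x := by
  simp [matRange, LinearMap.mem_range, Matrix.mulVecLin_apply]

lemma key_step {n k q : ℕ} (A0 : Matrix (Fin n) (Fin n) ℝ) (hA0 : IsUnit A0.det)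
    (Bl Br : Matrix (Fin n) (Fin k) ℝ) (D : Matrix (Fin k) (Fin k) ℝ)
    (hAv : IsUnit (A0 - Bl * D * Brᵀ).det)
    {q' : ℕ} (P : Matrix (Fin n) (Fin q') ℝ) (hBl : matRange Bl ≤ matRange P)
    (M : Matrix (Fin n) (Fin q) ℝ) :
    matRange ((A0 - Bl * D * Brᵀ)⁻¹ * M)
      ≤ matRange (A0⁻¹ * M) ⊔ matRange (A0⁻¹ * P) := by
  set Av := A0 - Bl * D * Brᵀ with hAvdef
  intro x hx
  rw [mem_matRange_iff] at hx
  obtain ⟨v, hv⟩ := hx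
  have hAvx : Av.mulVec x = M.mulVec v := by
    rw [← hv, Matrix.mulVec_mulVec, ← Matrix.mul_assoc,
      Matrix.mul_nonsing_inv _ hAv, Matrix.one_mul]
  obtain ⟨w, hw⟩ := (mem_matRange_iff P _).mp
    (hBl ((mem_matRange_iff Bl (Bl.mulVec ((D * Brᵀ).mulVec x))).mpr ⟨_, rfl⟩))
  have hA0x : A0.mulVec x = M.mulVec v + P.mulVec w := by
    have : A0.mulVec x = Av.mulVec x + (Bl * D * Brᵀ).mulVec x := by
      rw [hAvdef, Matrix.sub_mulVec]; abel
    rw [this, hAvx, hw, Matrix.mulVec_mulVec, Matrix.mul_assoc]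
  have hxeq : x = (A0⁻¹ * M).mulVec v + (A0⁻¹ * P).mulVec w := by
    have h1 : A0⁻¹.mulVec (A0.mulVec x) = x := by
      rw [Matrix.mulVec_mulVec, Matrix.nonsing_inv_mul _ hA0, Matrix.one_mulVec]
    rw [← h1, hA0x, Matrix.mulVec_add, Matrix.mulVec_mulVec, Matrix.mulVec_mulVec]
  rw [hxeq]
  exact Submodule.add_mem_sup ((mem_matRange_iff _ _).mpr ⟨v, rfl⟩)
    ((mem_matRange_iff _ _).mpr ⟨w, rfl⟩)

/-- With `A(v) = A₀ - Bl D Brᵀ` invertible, `Range(Bl) ⊆ Range(P)`, and the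
SMW core matrix `D⁻¹ - Brᵀ A₀⁻¹ Bl` invertible, the ranges of negative powers
are nested and hence the inverse block Krylov subspaces are nested. -/
theorem stmt_6 {n k : ℕ}
    (A0 : Matrix (Fin n) (Fin n) ℝ) (hA0 : IsUnit A0.det)
    (Bl Br : Matrix (Fin n) (Fin k) ℝ)
    (D : Matrix (Fin k) (Fin k) ℝ) (hDdiag : D.IsDiag) (hD : IsUnit D.det)
    (hAv : IsUnit (A0 - Bl * D * Brᵀ).det)
    (P : Matrix (Fin n) (Fin (2 * k)) ℝ)
    (hBl : matRange Bl ≤ matRange P)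
    (hS : IsUnit (D⁻¹ - Brᵀ * A0⁻¹ * Bl).det) :
    matRange ((A0 - Bl * D * Brᵀ)⁻¹ * P) ≤ matRange (A0⁻¹ * P) ∧
      (∀ j : ℕ, 1 ≤ j →
        matRange (((A0 - Bl * D * Brᵀ)⁻¹) ^ j * P)
          ≤ ⨆ i ∈ Finset.Icc 1 j, matRange ((A0⁻¹) ^ i * P)) ∧
      (∀ m : ℕ,
        (⨆ i ∈ Finset.range m,
            matRange (((A0 - Bl * D * Brᵀ)⁻¹) ^ i * ((A0 - Bl * D * Brᵀ)⁻¹ * P)))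
          ≤ ⨆ i ∈ Finset.range m, matRange ((A0⁻¹) ^ i * (A0⁻¹ * P))) := by
  set Av := A0 - Bl * D * Brᵀ with hAvdef
  -- first statement
  have h1 : matRange (Av⁻¹ * P) ≤ matRange (A0⁻¹ * P) := by
    have := key_step A0 hA0 Bl Br D hAv P hBl P
    simpa using this
  -- second statement by induction
  have h2 : ∀ j : ℕ, 1 ≤ j →
      matRange ((Av⁻¹) ^ j * P)
        ≤ ⨆ i ∈ Finset.Icc 1 j, matRange ((A0⁻¹) ^ i * P) := by
    intro j
    induction j with
    | zero => intro h; omega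
    | succ j ih =>
      intro _
      rcases Nat.eq_zero_or_pos j with hj0 | hj1
      · subst hj0
        refine le_trans ?_ (le_iSup₂ (f := fun i _ => matRange ((A0⁻¹) ^ i * P)) 1
          (by simp : (1 : ℕ) ∈ Finset.Icc 1 1))
        simpa [pow_one] using h1
      · -- Av⁻¹^(j+1) * P = Av⁻¹ * (Av⁻¹^j * P)
        have hsplit : (Av⁻¹) ^ (j + 1) * P = Av⁻¹ * ((Av⁻¹) ^ j * P) := by
          rw [pow_succ', Matrix.mul_assoc]
        rw [hsplit, matRange_mul_eq]
        calc (matRange ((Av⁻¹) ^ j * P)).map Av⁻¹.mulVecLin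
            ≤ (⨆ i ∈ Finset.Icc 1 j, matRange ((A0⁻¹) ^ i * P)).map Av⁻¹.mulVecLin :=
              Submodule.map_mono (ih hj1)
          _ = ⨆ i ∈ Finset.Icc 1 j, (matRange ((A0⁻¹) ^ i * P)).map Av⁻¹.mulVecLin := by
              rw [Submodule.map_iSup]
              exact iSup_congr fun i => Submodule.map_iSup _ _
          _ ≤ ⨆ i ∈ Finset.Icc 1 (j + 1), matRange ((A0⁻¹) ^ i * P) := by
              refine iSup₂_le fun i hi => ?_
              rw [← matRange_mul_eq]
              have hk := key_step A0 hA0 Bl Br D hAv P hBl ((A0⁻¹) ^ i * P)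
              refine le_trans hk (sup_le ?_ ?_)
              · have hmul : A0⁻¹ * ((A0⁻¹) ^ i * P) = (A0⁻¹) ^ (i + 1) * P := by
                  rw [← Matrix.mul_assoc, ← pow_succ']
                rw [hmul]
                refine le_iSup₂ (f := fun l _ => matRange ((A0⁻¹) ^ l * P)) (i + 1) ?_
                simp only [Finset.mem_Icc] at hi ⊢
                omega
              · have : (A0⁻¹ * P) = (A0⁻¹) ^ 1 * P := by rw [pow_one]
                rw [this]
                refine le_iSup₂ (f := fun l _ => matRange ((A0⁻¹) ^ l * P)) 1 ?_
                simp only [Finset.mem_Icc]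
                omega
  refine ⟨h1, h2, ?_⟩
  -- third statement
  intro m
  refine iSup₂_le fun i hi => ?_
  have hAvi : (Av⁻¹) ^ i * (Av⁻¹ * P) = (Av⁻¹) ^ (i + 1) * P := by
    rw [pow_succ, Matrix.mul_assoc]
  rw [hAvi]
  refine le_trans (h2 (i + 1) (by omega)) ?_
  refine iSup₂_le fun l hl => ?_
  simp only [Finset.mem_Icc] at hl
  simp only [Finset.mem_range] at hi
  have hl1 : l - 1 + 1 = l := by omega
  have hA0l : (A0⁻¹) ^ l * P = (A0⁻¹) ^ (l - 1) * (A0⁻¹ * P) := by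
    rw [← Matrix.mul_assoc, ← pow_succ, hl1]
  rw [hA0l]
  exact le_iSup₂ (f := fun i _ => matRange ((A0⁻¹) ^ i * (A0⁻¹ * P))) (l - 1)
    (Finset.mem_range.mpr (by omega))
end

section
/- Let N_1 = Q_0^T B_r ⊗ I_n, M_1 = Q_0^{-1} B_l ⊗ I_n, and L_0 = I ⊗ Λ_0 + Λ_0 ⊗ I with Λ_0 = diag(λ_1,…,λ_n) and λ_i + λ_j ≠ 0. Then for i = (t-1)n + s and j = (p-1)n + q, the (i,j)-entry of N_1^T L_0^{-1} M_1 equals δ_{q,s} · e_s^T (L ((Q_0^T B_r e_t) ∘ (Q_0^{-1} B_l e_p))), where L is the Cauchy matrix with L_{ab} = 1/(λ_a + λ_b). Consequently, N_1^T L_0^{-1} M_1, viewed as a k×k block matrix with n×n blocks, has all blocks diagonal, with (t,p)-block equal to diag(L ((Q_0^T B_r e_t) ∘ (Q_0^{-1} B_l e_p))). -/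
open Matrix Kronecker

/-- Entrywise structure of the `(1,1)`-block `N₁ᵀ L₀⁻¹ M₁` with
`N₁ = Q₀ᵀBr ⊗ I`, `M₁ = Q₀⁻¹Bl ⊗ I`, `L₀ = I ⊗ Λ₀ + Λ₀ ⊗ I`:
the entry at row `(t,s)` and column `(p,q)` equals
`δ_{q,s} · eₛᵀ (L ((Q₀ᵀBr e_t) ∘ (Q₀⁻¹Bl e_p)))` where `L` is the Cauchy
matrix; hence every `n×n` block of the `k×k` block matrix is diagonal. -/
theorem stmt_12 {n k : ℕ}
    (Q0 : Matrix (Fin n) (Fin n) ℂ) (hQ0 : IsUnit Q0.det)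
    (Bl Br : Matrix (Fin n) (Fin k) ℂ)
    (lam : Fin n → ℂ) (hlam : ∀ i j, lam i + lam j ≠ 0) :
    let L0 : Matrix (Fin n × Fin n) (Fin n × Fin n) ℂ :=
      (1 : Matrix (Fin n) (Fin n) ℂ) ⊗ₖ Matrix.diagonal lam
        + Matrix.diagonal lam ⊗ₖ (1 : Matrix (Fin n) (Fin n) ℂ)
    let N1 := (Q0ᵀ * Br) ⊗ₖ (1 : Matrix (Fin n) (Fin n) ℂ)
    let M1 := (Q0⁻¹ * Bl) ⊗ₖ (1 : Matrix (Fin n) (Fin n) ℂ)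
    let L : Matrix (Fin n) (Fin n) ℂ := Matrix.of fun a b => (lam a + lam b)⁻¹
    ∀ (t p : Fin k) (s q : Fin n),
      (N1ᵀ * L0⁻¹ * M1) (t, s) (p, q)
        = (if q = s then (1 : ℂ) else 0)
            * (L *ᵥ fun a => (Q0ᵀ * Br) a t * (Q0⁻¹ * Bl) a p) s := by
  intro L0 N1 M1 L t p s q
  have hL0 : L0 = Matrix.diagonal (fun x : Fin n × Fin n => lam x.1 + lam x.2) := by
    ext ⟨a, b⟩ ⟨c, d⟩
    simp only [L0, Matrix.add_apply, Matrix.kroneckerMap_apply, Matrix.one_apply,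
      Matrix.diagonal_apply, Prod.mk.injEq]
    by_cases hac : a = c <;> by_cases hbd : b = d <;> simp [hac, hbd, add_comm]
  have hinv : L0⁻¹ = Matrix.diagonal (fun x : Fin n × Fin n => (lam x.1 + lam x.2)⁻¹) := by
    refine Matrix.inv_eq_right_inv ?_
    rw [hL0, Matrix.diagonal_mul_diagonal]
    have h1 : (fun x : Fin n × Fin n => (lam x.1 + lam x.2) * (lam x.1 + lam x.2)⁻¹)
        = fun _ => (1 : ℂ) := by
      funext x; exact mul_inv_cancel₀ (hlam x.1 x.2)
    rw [h1, Matrix.diagonal_one]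
  rw [Matrix.mul_apply]
  simp only [hinv, Matrix.mul_diagonal, Matrix.transpose_apply, N1, M1,
    Matrix.kroneckerMap_apply, Matrix.one_apply, Fintype.sum_prod_type,
    Matrix.mulVec, dotProduct, L, Matrix.of_apply]
  simp only [mul_ite, ite_mul, mul_one, one_mul, mul_zero, zero_mul,
    Finset.sum_ite_eq, Finset.mem_univ, if_true]
  by_cases hqs : q = s
  · subst hqs
    simp only [if_pos rfl, one_mul, Finset.mul_sum]
    refine Finset.sum_congr rfl fun a _ => ?_
    simp only [Finset.sum_ite_eq', Finset.mem_univ, if_true, if_pos rfl]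
    rw [add_comm (lam a) (lam q)]
    ring
  · simp [hqs, Ne.symm hqs]
end
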